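/- In FDM, the total utility received by the weak critical ancestors in M_{c_{j-1}c_j} together with the reward to c_j is at most the difference v^{1st}_{N_{-c_j}} − v^{1st}_{N_{-({c_j} ∪ M_{c_{j-1}c_j})}} being redistributed; i.e., Σ_{i ∈ M_{c_{j-1}c_j} ∪ {c_j}} R_i ≤ v^{1st}_{N_{-c_j}} − v^{1st}_{N_{-({c_j} ∪ M_{c_{j-1}c_j})}}, so the seller's remainder from this segment is non-negative. -/
import Mathlib


/-- The set of buyers still connected to the seller `s` after removing the set `D`:
vertices `y ≠ s`, `y ∉ D`, admitting a walk from `s` avoiding `D`. -/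
def remConn {V : Type*} (G : SimpleGraph V) (s : V) (D : Set V) : Set V :=
  {y | y ≠ s ∧ y ∉ D ∧ ∃ p : G.Walk s y, ∀ d ∈ D, d ∉ p.support}

/-- The highest reported valuation among buyers still connected to `s` after removing `D`
(`0` if there are none). -/
noncomputable def v1 {V : Type*} (G : SimpleGraph V) (s : V) (v : V → ℝ) (D : Set V) : ℝ :=
  sSup (insert 0 (v '' remConn G s D))

/-- `D` is a cut set of buyer `i`: every walk from the seller `s` to `i` meets `D`. -/
def isCutSet {V : Type*} (G : SimpleGraph V) (s i : V) (D : Set V) : Prop :=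
  ∀ p : G.Walk s i, ∃ d ∈ D, d ∈ p.support

/-- `j` is a strong critical ancestor of `i`: `j` is a buyer distinct from `i`
lying on every walk from the seller `s` to `i`. -/
def isSCA {V : Type*} (G : SimpleGraph V) (s i j : V) : Prop :=
  j ≠ i ∧ j ≠ s ∧ ∀ p : G.Walk s i, j ∈ p.support

/-- The critical descendant set of `x`: buyers `y` such that every walk from `s` to `y`
passes through `x`, together with `x` itself. -/
def critDesc {V : Type*} (G : SimpleGraph V) (s x : V) : Set V :=
  {y | ∀ p : G.Walk s y, x ∈ p.support} ∪ {x}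

/-- The total FDM reward redistributed between consecutive strong critical ancestors is
at most the difference being redistributed: each recipient `i ∈ M ∪ {c_j}` gets
`(v1_{N_{-S_i}} - v1_{N_{-({c_j} ∪ M)}}) / (|M| + 1)` with `c_j ∈ S_i ⊆ {c_j} ∪ M`, so
the rewards sum to at most `v1_{N_{-c_j}} - v1_{N_{-({c_j} ∪ M)}}` and the seller's
remainder from this segment is non-negative. -/

lemma v1_antitone {V : Type*} [Fintype V] (G : SimpleGraph V) (s : V) (v : V → ℝ)
    {D1 D2 : Set V} (h : D1 ⊆ D2) : v1 G s v D2 ≤ v1 G s v D1 := by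
  apply csSup_le_csSup (Set.Finite.bddAbove (Set.toFinite _))
  · exact Set.insert_nonempty _ _
  · apply Set.insert_subset_insert
    apply Set.image_mono
    rintro y ⟨hy1, hy2, p, hp⟩
    exact ⟨hy1, fun hmem => hy2 (h hmem), p, fun d hd => hp d (h hd)⟩

theorem fdm_segment_rewards_le_difference {V : Type*} [Fintype V] [DecidableEq V]
    (G : SimpleGraph V) (s : V) (v : V → ℝ)
    (cj : V) (M : Finset V) (hcj : cj ∉ M)
    (S : V → Set V) (R : V → ℝ)
    (hS : ∀ i ∈ insert cj M, cj ∈ S i ∧ S i ⊆ ({cj} : Set V) ∪ ↑M)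
    (hR : ∀ i ∈ insert cj M,
      R i = (v1 G s v (S i) - v1 G s v (({cj} : Set V) ∪ ↑M)) / (M.card + 1)) :
    ∑ i ∈ insert cj M, R i
      ≤ v1 G s v {cj} - v1 G s v (({cj} : Set V) ∪ ↑M) := by
  have key : ∀ i ∈ insert cj M,
      R i ≤ (v1 G s v {cj} - v1 G s v (({cj} : Set V) ∪ ↑M)) / (M.card + 1) := by
    intro i hi
    rw [hR i hi]
    apply div_le_div_of_nonneg_right _ (by positivity)
    have h1 : v1 G s v (S i) ≤ v1 G s v {cj} :=
      v1_antitone G s v (Set.singleton_subset_iff.mpr (hS i hi).1)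
    linarith
  calc ∑ i ∈ insert cj M, R i
      ≤ ∑ _i ∈ insert cj M, (v1 G s v {cj} - v1 G s v (({cj} : Set V) ∪ ↑M)) / (M.card + 1) :=
        Finset.sum_le_sum key
    _ = (M.card + 1) * ((v1 G s v {cj} - v1 G s v (({cj} : Set V) ∪ ↑M)) / (M.card + 1)) := by
        rw [Finset.sum_const, Finset.card_insert_of_notMem hcj]
        ring
    _ = v1 G s v {cj} - v1 G s v (({cj} : Set V) ∪ ↑M) := by
        field_simp
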